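/- Let a = c₁ + c₂j be a nonzero lightlike split quaternion (c₁, c₂ ∈ ℂ, c₁ ≠ 0) and d ∈ ℍₛ. Then the equation x a = d has a solution x ∈ ℍₛ if and only if (1/2) · d · (1 + (c₂/c₁) j) = d; and in that case the set of all solutions is exactly { d · ((c̄₁ + c₂j)/(4|c₁|²)) + (1/2) · y · (1 − (c₂/c̄₁) j) : y ∈ ℍₛ }. -/

import Mathlib

open Quaternion

/-- The split quaternions: `ℍ[ℝ, -1, 1]`. -/
abbrev SplitQuaternion : Type := ℍ[ℝ, -1, 1]

/-- The imaginary unit `j` of the split quaternions. -/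
def qj : SplitQuaternion := ⟨0, 0, 1, 0⟩

/-- The embedding `ℂ = ℝ + ℝi ⊂ ℍₛ`. -/
def toQ (z : ℂ) : SplitQuaternion := ⟨z.re, z.im, 0, 0⟩

lemma toQ_one' : (toQ 1 : SplitQuaternion) = 1 := by ext <;> simp [toQ]
lemma toQ_zero' : (toQ 0 : SplitQuaternion) = 0 := by ext <;> simp [toQ]
lemma toQ_neg' (z : ℂ) : toQ (-z) = -toQ z := by ext <;> simp [toQ]

lemma mulform (u v u' v' : ℂ) :
    (toQ u + toQ v * qj) * (toQ u' + toQ v' * qj) =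
      toQ (u * u' + v * (starRingEnd ℂ v')) + toQ (u * v' + v * (starRingEnd ℂ u')) * qj := by
  ext <;> simp [toQ, qj, Complex.mul_re, Complex.mul_im] <;> ring

lemma smulform (r : ℝ) (u v : ℂ) :
    r • (toQ u + toQ v * qj) = toQ ((r : ℂ) * u) + toQ ((r : ℂ) * v) * qj := by
  ext <;> simp [toQ, qj, Complex.mul_re, Complex.mul_im]

lemma I1 (c₁ c₂ : ℂ) (hc : c₁ ≠ 0)
    (key : c₂ * starRingEnd ℂ c₂ = c₁ * starRingEnd ℂ c₁) :
    (1/2 : ℝ) • ((toQ c₁ + toQ c₂ * qj) * (1 + toQ (c₂/c₁) * qj))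
    = toQ c₁ + toQ c₂ * qj := by
  have hc' : starRingEnd ℂ c₁ ≠ 0 := by simpa using hc
  rw [show (1 : SplitQuaternion) + toQ (c₂/c₁) * qj = toQ 1 + toQ (c₂/c₁) * qj by
    rw [toQ_one'], mulform, smulform]
  have e1 : ((1/2 : ℝ) : ℂ) * (c₁ * 1 + c₂ * starRingEnd ℂ (c₂ / c₁)) = c₁ := by
    rw [map_div₀]
    field_simp
    push_cast
    linear_combination (1/2 : ℂ) * key
  have e2 : ((1/2 : ℝ) : ℂ) * (c₁ * (c₂ / c₁) + c₂ * starRingEnd ℂ 1) = c₂ := by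
    rw [map_one]
    field_simp
    push_cast
    ring
  rw [e1, e2]

lemma I2 (c₁ c₂ : ℂ) (hc : c₁ ≠ 0)
    (key : c₂ * starRingEnd ℂ c₂ = c₁ * starRingEnd ℂ c₁) :
    (toQ (starRingEnd ℂ c₁) + toQ c₂ * qj) * (toQ c₁ + toQ c₂ * qj)
    = (2 * Complex.normSq c₁ : ℝ) • (1 + toQ (c₂/c₁) * qj) := by
  rw [show (1 : SplitQuaternion) + toQ (c₂/c₁) * qj = toQ 1 + toQ (c₂/c₁) * qj by
    rw [toQ_one'], mulform, smulform]
  have hN : ((2 * Complex.normSq c₁ : ℝ) : ℂ) = 2 * (c₁ * starRingEnd ℂ c₁) := by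
    push_cast
    rw [← Complex.mul_conj]
  have e1 : starRingEnd ℂ c₁ * c₁ + c₂ * starRingEnd ℂ c₂
      = ((2 * Complex.normSq c₁ : ℝ) : ℂ) * 1 := by
    rw [hN]; linear_combination key
  have e2 : starRingEnd ℂ c₁ * c₂ + c₂ * starRingEnd ℂ c₁
      = ((2 * Complex.normSq c₁ : ℝ) : ℂ) * (c₂ / c₁) := by
    rw [hN]; field_simp; ring
  rw [e1, e2]

lemma I3 (c₁ c₂ : ℂ) (hc : c₁ ≠ 0)
    (key : c₂ * starRingEnd ℂ c₂ = c₁ * starRingEnd ℂ c₁) :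
    (1 - toQ (c₂ / starRingEnd ℂ c₁) * qj) * (toQ c₁ + toQ c₂ * qj) = 0 := by
  have hc' : starRingEnd ℂ c₁ ≠ 0 := by simpa using hc
  have h0 : (1 : SplitQuaternion) - toQ (c₂ / starRingEnd ℂ c₁) * qj
      = toQ 1 + toQ (-(c₂ / starRingEnd ℂ c₁)) * qj := by
    rw [toQ_one', toQ_neg', sub_eq_add_neg, neg_mul]
  rw [h0, mulform]
  have e1 : 1 * c₁ + -(c₂ / starRingEnd ℂ c₁) * starRingEnd ℂ c₂ = 0 := by
    field_simp
    linear_combination -key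
  have e2 : 1 * c₂ + -(c₂ / starRingEnd ℂ c₁) * starRingEnd ℂ c₁ = 0 := by
    field_simp
    ring
  rw [e1, e2, toQ_zero', zero_mul, add_zero]

lemma I4 (c₁ c₂ : ℂ) (hc : c₁ ≠ 0) :
    (toQ c₁ + toQ c₂ * qj) * toQ (starRingEnd ℂ c₁)
    = (Complex.normSq c₁ : ℝ) • (1 + toQ (c₂ / starRingEnd ℂ c₁) * qj) := by
  have hc' : starRingEnd ℂ c₁ ≠ 0 := by simpa using hc
  have h0 : (toQ (starRingEnd ℂ c₁) : SplitQuaternion)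
      = toQ (starRingEnd ℂ c₁) + toQ 0 * qj := by rw [toQ_zero', zero_mul, add_zero]
  rw [h0, mulform, show (1 : SplitQuaternion) + toQ (c₂ / starRingEnd ℂ c₁) * qj
      = toQ 1 + toQ (c₂ / starRingEnd ℂ c₁) * qj by rw [toQ_one'], smulform]
  have hN : ((Complex.normSq c₁ : ℝ) : ℂ) = c₁ * starRingEnd ℂ c₁ := by
    rw [← Complex.mul_conj]
  have e1 : c₁ * starRingEnd ℂ c₁ + c₂ * starRingEnd ℂ 0
      = ((Complex.normSq c₁ : ℝ) : ℂ) * 1 := by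
    rw [hN]; simp
  have e2 : c₁ * 0 + c₂ * starRingEnd ℂ (starRingEnd ℂ c₁)
      = ((Complex.normSq c₁ : ℝ) : ℂ) * (c₂ / starRingEnd ℂ c₁) := by
    rw [hN, Complex.conj_conj]; field_simp; ring
  rw [e1, e2]

/-- For a nonzero lightlike split quaternion `a = c₁ + c₂j`, the equation `x a = d` is
solvable iff `(1/2) d (1 + (c₂/c₁)j) = d`, in which case the solutions are exactly
`x = d ((c̄₁ + c₂j)/(4|c₁|²)) + (1/2) y (1 − (c₂/c̄₁)j)`, `y ∈ ℍₛ`. -/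
theorem xa_eq_d_solvable (c₁ c₂ : ℂ) (hc : c₁ ≠ 0)
    (hla : ‖c₁‖ = ‖c₂‖)
    (a d : SplitQuaternion) (ha : a = toQ c₁ + toQ c₂ * qj) :
    ((∃ x : SplitQuaternion, x * a = d) ↔
        (1 / 2 : ℝ) • (d * (1 + toQ (c₂ / c₁) * qj)) = d) ∧
      ((1 / 2 : ℝ) • (d * (1 + toQ (c₂ / c₁) * qj)) = d →
        {x : SplitQuaternion | x * a = d} =
          {x : SplitQuaternion | ∃ y : SplitQuaternion,
            x = ((4 * ‖c₁‖ ^ 2)⁻¹ : ℝ) •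
                  (d * (toQ (starRingEnd ℂ c₁) + toQ c₂ * qj)) +
                (1 / 2 : ℝ) • (y * (1 - toQ (c₂ / starRingEnd ℂ c₁) * qj))}) := by
  subst ha
  have hN : Complex.normSq c₁ ≠ 0 := by simpa using hc
  have key : c₂ * starRingEnd ℂ c₂ = c₁ * starRingEnd ℂ c₁ := by
    rw [Complex.mul_conj, Complex.mul_conj]
    norm_cast
    rw [← Complex.sq_norm, ← Complex.sq_norm, hla]
  have hI1 := I1 c₁ c₂ hc key
  have hI2 := I2 c₁ c₂ hc key
  have hI3 := I3 c₁ c₂ hc key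
  have hI4 := I4 c₁ c₂ hc
  have habs : ((4 * ‖c₁‖ ^ 2)⁻¹ : ℝ) = (4 * Complex.normSq c₁)⁻¹ := by
    rw [Complex.sq_norm]
  -- the particular solution
  have hx0 : (1 / 2 : ℝ) • (d * (1 + toQ (c₂ / c₁) * qj)) = d →
      (((4 * ‖c₁‖ ^ 2)⁻¹ : ℝ) •
        (d * (toQ (starRingEnd ℂ c₁) + toQ c₂ * qj))) * (toQ c₁ + toQ c₂ * qj) = d := by
    intro h
    rw [smul_mul_assoc, mul_assoc, hI2, mul_smul_comm, smul_smul, habs,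
      show (4 * Complex.normSq c₁)⁻¹ * (2 * Complex.normSq c₁) = 1/2 by
        field_simp; ring]
    exact h
  refine ⟨⟨?_, ?_⟩, ?_⟩
  · rintro ⟨x, rfl⟩
    rw [mul_assoc, ← mul_smul_comm, hI1]
  · intro h
    exact ⟨_, hx0 h⟩
  · intro h
    ext x
    simp only [Set.mem_setOf_eq]
    set x₀ : SplitQuaternion := ((4 * ‖c₁‖ ^ 2)⁻¹ : ℝ) •
      (d * (toQ (starRingEnd ℂ c₁) + toQ c₂ * qj)) with hx₀def
    constructor
    · intro hx
      refine ⟨x - x₀, ?_⟩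
      have hya : (x - x₀) * (toQ c₁ + toQ c₂ * qj) = 0 := by
        rw [sub_mul, hx, hx0 h, sub_self]
      have h4 : (Complex.normSq c₁ : ℝ) •
          ((x - x₀) * (1 + toQ (c₂ / starRingEnd ℂ c₁) * qj)) = 0 := by
        rw [← mul_smul_comm, ← hI4, ← mul_assoc, hya, zero_mul]
      have h5 : (x - x₀) * (1 + toQ (c₂ / starRingEnd ℂ c₁) * qj) = 0 := by
        rcases smul_eq_zero.mp h4 with h' | h'
        · exact absurd h' hN
        · exact h'
      have h5' : (x - x₀) * (toQ (c₂ / starRingEnd ℂ c₁) * qj) = -(x - x₀) := by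
        rw [mul_add, mul_one] at h5
        exact eq_neg_of_add_eq_zero_right h5
      have h6 : (1 / 2 : ℝ) • ((x - x₀) * (1 - toQ (c₂ / starRingEnd ℂ c₁) * qj))
          = x - x₀ := by
        rw [mul_sub, mul_one, h5', sub_neg_eq_add,
          show (x - x₀) + (x - x₀) = (2 : ℝ) • (x - x₀) by rw [two_smul],
          smul_smul]
        norm_num
      rw [h6]
      abel
    · rintro ⟨y, rfl⟩
      rw [add_mul, hx0 h, smul_mul_assoc, mul_assoc, hI3, mul_zero, smul_zero, add_zero]
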